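/- Let K : ℝ → ℝ be continuous, periodic with period 1, and symmetric (K(−x)=K(x)), and let 𝐊 be the integral operator (𝐊g)(x) = ∫₀¹ K(x−y) g(y) dy on L²[0,1]. If 𝐊 is positive semidefinite, then for every g ∈ L²[0,1], ‖𝐊g‖_{L^∞}² ≤ ‖K‖_{L^∞} · ⟨g, 𝐊g⟩. -/

import Mathlib

open MeasureTheory Set Filter

lemma csb_absK {K : ℝ → ℝ} (hK : Continuous K) (hper : ∀ x, K (x + 1) = K x) (t : ℝ) :
    |K t| ≤ sSup (Set.range fun t => |K t|) := by
  have hP : Function.Periodic K 1 := hper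
  have hfr : ∀ s : ℝ, K (Int.fract s) = K s := by
    intro s
    have h := hP.sub_int_mul_eq (x := s) ⌊s⌋
    rw [mul_one, Int.self_sub_floor] at h
    exact h
  have hrange : (Set.range fun t => |K t|) = (fun t => |K t|) '' Set.Icc 0 1 := by
    apply Set.Subset.antisymm
    · rintro _ ⟨s, rfl⟩
      exact ⟨Int.fract s, ⟨Int.fract_nonneg s, (Int.fract_lt_one s).le⟩, by simp [hfr s]⟩
    · rintro _ ⟨s, _, rfl⟩; exact ⟨s, rfl⟩
  have hbdd : BddAbove (Set.range fun t => |K t|) := by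
    rw [hrange]
    exact (isCompact_Icc.image hK.abs).bddAbove
  exact le_csSup hbdd ⟨t, rfl⟩

lemma int_Kmul {K : ℝ → ℝ} (hK : Continuous K) {M : ℝ} (hM : ∀ t, |K t| ≤ M)
    {h : ℝ → ℝ} (hm : Measurable h) (hi : Integrable h (volume.restrict (Set.Ioc (0:ℝ) 1)))
    (x : ℝ) :
    Integrable (fun y => K (x - y) * h y) (volume.restrict (Set.Ioc (0:ℝ) 1)) := by
  exact hi.bdd_mul ((hK.comp (continuous_const.sub continuous_id)).aestronglyMeasurable)
    (c := M) (ae_of_all _ fun y => by simpa [Real.norm_eq_abs] using hM (x - y))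

lemma Kop_bound {K : ℝ → ℝ} (hK : Continuous K) {M : ℝ} (hM : ∀ t, |K t| ≤ M)
    {h : ℝ → ℝ} (hm : Measurable h) (hi : Integrable h (volume.restrict (Set.Ioc (0:ℝ) 1)))
    (x : ℝ) :
    |∫ y in Set.Ioc (0:ℝ) 1, K (x - y) * h y| ≤ M * ∫ y in Set.Ioc (0:ℝ) 1, |h y| := by
  rw [← Real.norm_eq_abs, ← integral_const_mul]
  refine norm_integral_le_of_norm_le ((hi.abs).const_mul M) ?_
  filter_upwards with y
  rw [Real.norm_eq_abs, abs_mul]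
  exact mul_le_mul_of_nonneg_right (hM _) (abs_nonneg _)

lemma Kop_cont {K : ℝ → ℝ} (hK : Continuous K) {M : ℝ} (hM : ∀ t, |K t| ≤ M)
    {h : ℝ → ℝ} (hm : Measurable h) (hi : Integrable h (volume.restrict (Set.Ioc (0:ℝ) 1))) :
    Continuous fun x => ∫ y in Set.Ioc (0:ℝ) 1, K (x - y) * h y := by
  rw [continuous_iff_continuousAt]
  intro x₀
  apply continuousAt_of_dominated (bound := fun y => M * |h y|)
  · exact Eventually.of_forall fun x =>
      ((hK.comp (continuous_const.sub continuous_id)).aestronglyMeasurable.mul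
        hm.aestronglyMeasurable)
  · refine Eventually.of_forall fun x => Eventually.of_forall fun y => ?_
    rw [Real.norm_eq_abs, abs_mul]
    exact mul_le_mul_of_nonneg_right (hM _) (abs_nonneg _)
  · exact hi.abs.const_mul M
  · exact Eventually.of_forall fun y =>
      (((hK.comp (continuous_id.sub continuous_const)).continuousAt).mul continuousAt_const)

lemma prod_int {K : ℝ → ℝ} (hK : Continuous K) {M : ℝ} (hM : ∀ t, |K t| ≤ M)
    {h₁ h₂ : ℝ → ℝ} (hm₁ : Measurable h₁)
    (hi₁ : Integrable h₁ (volume.restrict (Set.Ioc (0:ℝ) 1)))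
    (hm₂ : Measurable h₂) (hi₂ : Integrable h₂ (volume.restrict (Set.Ioc (0:ℝ) 1))) :
    Integrable (fun x => h₁ x * ∫ y in Set.Ioc (0:ℝ) 1, K (x - y) * h₂ y)
      (volume.restrict (Set.Ioc (0:ℝ) 1)) := by
  have := Integrable.bdd_mul hi₁ (Kop_cont hK hM hm₂ hi₂).aestronglyMeasurable
    (c := M * ∫ y in Set.Ioc (0:ℝ) 1, |h₂ y|) (ae_of_all _ fun x => by
      simpa [Real.norm_eq_abs] using Kop_bound hK hM hm₂ hi₂ x)
  exact this.congr (Eventually.of_forall fun x => mul_comm _ _)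

lemma B_symm {K : ℝ → ℝ} (hK : Continuous K) (hsymm : ∀ x, K (-x) = K x)
    {M : ℝ} (hM : ∀ t, |K t| ≤ M)
    {f g : ℝ → ℝ} (hfm : Measurable f) (hgm : Measurable g)
    (hfi : Integrable f (volume.restrict (Set.Ioc (0:ℝ) 1)))
    (hgi : Integrable g (volume.restrict (Set.Ioc (0:ℝ) 1))) :
    (∫ x in Set.Ioc (0:ℝ) 1, f x * ∫ y in Set.Ioc (0:ℝ) 1, K (x - y) * g y)
      = ∫ x in Set.Ioc (0:ℝ) 1, g x * ∫ y in Set.Ioc (0:ℝ) 1, K (x - y) * f y := by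
  set μ := volume.restrict (Set.Ioc (0:ℝ) 1)
  have hKxy : ∀ x y : ℝ, K (x - y) = K (y - x) := fun x y => by
    rw [← hsymm (y - x)]; ring_nf
  have huncurry : Integrable (fun p : ℝ × ℝ => f p.1 * (K (p.1 - p.2) * g p.2)) (μ.prod μ) := by
    refine Integrable.mono' (((hfi.abs.const_mul M)).mul_prod hgi.abs) ?_ ?_
    · exact ((hfm.comp measurable_fst).mul
        ((hK.measurable.comp (measurable_fst.sub measurable_snd)).mul
          (hgm.comp measurable_snd))).aestronglyMeasurable
    · filter_upwards with p
      rw [Real.norm_eq_abs, abs_mul, abs_mul]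
      calc |f p.1| * (|K (p.1 - p.2)| * |g p.2|) ≤ |f p.1| * (M * |g p.2|) := by
            exact mul_le_mul_of_nonneg_left
              (mul_le_mul_of_nonneg_right (hM _) (abs_nonneg _)) (abs_nonneg _)
        _ = M * |f p.1| * |g p.2| := by ring
  calc (∫ x in Set.Ioc (0:ℝ) 1, f x * ∫ y in Set.Ioc (0:ℝ) 1, K (x - y) * g y)
      = ∫ x in Set.Ioc (0:ℝ) 1, ∫ y in Set.Ioc (0:ℝ) 1, f x * (K (x - y) * g y) := by
        simp_rw [integral_const_mul]
    _ = ∫ y in Set.Ioc (0:ℝ) 1, ∫ x in Set.Ioc (0:ℝ) 1, f x * (K (x - y) * g y) :=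
        integral_integral_swap huncurry
    _ = ∫ y in Set.Ioc (0:ℝ) 1, g y * ∫ x in Set.Ioc (0:ℝ) 1, K (y - x) * f x := by
        refine integral_congr_ae (Eventually.of_forall fun y => ?_)
        show (∫ x in Set.Ioc (0:ℝ) 1, f x * (K (x - y) * g y))
          = g y * ∫ x in Set.Ioc (0:ℝ) 1, K (y - x) * f x
        rw [← integral_const_mul]
        refine integral_congr_ae (Eventually.of_forall fun x => ?_)
        show f x * (K (x - y) * g y) = g y * (K (y - x) * f x)
        rw [hKxy x y]; ring

lemma B_cs {K : ℝ → ℝ} (hK : Continuous K) (hsymm : ∀ x, K (-x) = K x)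
    {M : ℝ} (hM : ∀ t, |K t| ≤ M)
    (hpsd : ∀ f : ℝ → ℝ, Measurable f →
      MemLp f 2 (volume.restrict (Set.Icc (0:ℝ) 1)) →
      0 ≤ ∫ x in (0:ℝ)..1, f x * ∫ y in (0:ℝ)..1, K (x - y) * f y)
    {f g : ℝ → ℝ} (hfm : Measurable f) (hgm : Measurable g)
    (hf2 : MemLp f 2 (volume.restrict (Set.Icc (0:ℝ) 1)))
    (hg2 : MemLp g 2 (volume.restrict (Set.Icc (0:ℝ) 1))) :
    (∫ x in Set.Ioc (0:ℝ) 1, f x * ∫ y in Set.Ioc (0:ℝ) 1, K (x - y) * g y) ^ 2 ≤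
      (∫ x in Set.Ioc (0:ℝ) 1, f x * ∫ y in Set.Ioc (0:ℝ) 1, K (x - y) * f y) *
      (∫ x in Set.Ioc (0:ℝ) 1, g x * ∫ y in Set.Ioc (0:ℝ) 1, K (x - y) * g y) := by
  haveI : IsFiniteMeasure (volume.restrict (Set.Icc (0:ℝ) 1)) := by
    constructor
    rw [Measure.restrict_apply_univ]
    simp
  have hmono : volume.restrict (Set.Ioc (0:ℝ) 1) ≤ volume.restrict (Set.Icc (0:ℝ) 1) :=
    Measure.restrict_mono Set.Ioc_subset_Icc_self le_rfl
  have hfi : Integrable f (volume.restrict (Set.Ioc (0:ℝ) 1)) :=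
    (hf2.integrable one_le_two).mono_measure hmono
  have hgi : Integrable g (volume.restrict (Set.Ioc (0:ℝ) 1)) :=
    (hg2.integrable one_le_two).mono_measure hmono
  set Kf := fun x => ∫ y in Set.Ioc (0:ℝ) 1, K (x - y) * f y with hKf
  set Kg := fun x => ∫ y in Set.Ioc (0:ℝ) 1, K (x - y) * g y with hKg
  set Bff := ∫ x in Set.Ioc (0:ℝ) 1, f x * Kf x with hBff
  set Bfg := ∫ x in Set.Ioc (0:ℝ) 1, f x * Kg x with hBfg
  set Bgg := ∫ x in Set.Ioc (0:ℝ) 1, g x * Kg x with hBgg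
  have hsymmB : (∫ x in Set.Ioc (0:ℝ) 1, g x * Kf x) = Bfg :=
    (B_symm hK hsymm hM hgm hfm hgi hfi)
  have quad : ∀ t : ℝ, 0 ≤ Bgg * (t * t) + (2 * Bfg) * t + Bff := by
    intro t
    have hmeas : Measurable (fun u => f u + t * g u) := hfm.add (hgm.const_mul t)
    have hmem : MemLp (fun u => f u + t * g u) 2 (volume.restrict (Set.Icc (0:ℝ) 1)) := by
      have := hf2.add (hg2.const_mul t)
      exact this
    have h0 := hpsd _ hmeas hmem
    rw [intervalIntegral.integral_of_le zero_le_one] at h0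
    simp_rw [intervalIntegral.integral_of_le zero_le_one] at h0
    have hinner : ∀ x : ℝ,
        (∫ y in Set.Ioc (0:ℝ) 1, K (x - y) * (f y + t * g y)) = Kf x + t * Kg x := by
      intro x
      have e1 : (fun y => K (x - y) * (f y + t * g y))
          = fun y => K (x - y) * f y + t * (K (x - y) * g y) := funext fun y => by ring
      rw [e1, integral_add (int_Kmul hK hM hfm hfi x)
        ((int_Kmul hK hM hgm hgi x).const_mul t), integral_const_mul]
    have hexp : (∫ x in Set.Ioc (0:ℝ) 1, (f x + t * g x) *
        ∫ y in Set.Ioc (0:ℝ) 1, K (x - y) * (f y + t * g y))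
        = Bff + t * Bfg + (t * (∫ x in Set.Ioc (0:ℝ) 1, g x * Kf x) + t ^ 2 * Bgg) := by
      have e2 : (fun x => (f x + t * g x) *
          ∫ y in Set.Ioc (0:ℝ) 1, K (x - y) * (f y + t * g y))
          = fun x => (f x * Kf x + t * (f x * Kg x)) +
              (t * (g x * Kf x) + t ^ 2 * (g x * Kg x)) := by
        funext x
        rw [hinner x]
        ring
      have i1 : Integrable (fun x => f x * Kf x) (volume.restrict (Set.Ioc (0:ℝ) 1)) :=
        prod_int hK hM hfm hfi hfm hfi
      have i2 : Integrable (fun x => f x * Kg x) (volume.restrict (Set.Ioc (0:ℝ) 1)) :=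
        prod_int hK hM hfm hfi hgm hgi
      have i3 : Integrable (fun x => g x * Kf x) (volume.restrict (Set.Ioc (0:ℝ) 1)) :=
        prod_int hK hM hgm hgi hfm hfi
      have i4 : Integrable (fun x => g x * Kg x) (volume.restrict (Set.Ioc (0:ℝ) 1)) :=
        prod_int hK hM hgm hgi hgm hgi
      have E : (∫ x in Set.Ioc (0:ℝ) 1, (f x * Kf x + t * (f x * Kg x)) +
            (t * (g x * Kf x) + t ^ 2 * (g x * Kg x)))
          = (∫ x in Set.Ioc (0:ℝ) 1, f x * Kf x + t * (f x * Kg x)) +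
            ∫ x in Set.Ioc (0:ℝ) 1, t * (g x * Kf x) + t ^ 2 * (g x * Kg x) :=
        integral_add (i1.add (i2.const_mul t)) ((i3.const_mul t).add (i4.const_mul (t ^ 2)))
      have E1 : (∫ x in Set.Ioc (0:ℝ) 1, f x * Kf x + t * (f x * Kg x))
          = (∫ x in Set.Ioc (0:ℝ) 1, f x * Kf x) +
            ∫ x in Set.Ioc (0:ℝ) 1, t * (f x * Kg x) :=
        integral_add i1 (i2.const_mul t)
      have E2 : (∫ x in Set.Ioc (0:ℝ) 1, t * (g x * Kf x) + t ^ 2 * (g x * Kg x))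
          = (∫ x in Set.Ioc (0:ℝ) 1, t * (g x * Kf x)) +
            ∫ x in Set.Ioc (0:ℝ) 1, t ^ 2 * (g x * Kg x) :=
        integral_add (i3.const_mul t) (i4.const_mul (t ^ 2))
      rw [e2, E, E1, E2, integral_const_mul, integral_const_mul, integral_const_mul]
    rw [hexp, hsymmB] at h0
    nlinarith [h0]
  have hdisc := discrim_le_zero quad
  rw [discrim] at hdisc
  nlinarith [hdisc]

theorem convolution_sup_bound (K : ℝ → ℝ) (hK : Continuous K)
    (hper : ∀ x, K (x + 1) = K x) (hsymm : ∀ x, K (-x) = K x)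
    (hpsd : ∀ f : ℝ → ℝ, Measurable f →
      MemLp f 2 (volume.restrict (Set.Icc (0:ℝ) 1)) →
      0 ≤ ∫ x in (0:ℝ)..1, f x * ∫ y in (0:ℝ)..1, K (x - y) * f y)
    (g : ℝ → ℝ) (hg : Measurable g)
    (hg2 : MemLp g 2 (volume.restrict (Set.Icc (0:ℝ) 1))) :
    ∀ x : ℝ, (∫ y in (0:ℝ)..1, K (x - y) * g y) ^ 2 ≤
      sSup (Set.range fun t => |K t|) *
        ∫ x in (0:ℝ)..1, g x * ∫ y in (0:ℝ)..1, K (x - y) * g y := by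
  intro x
  have hP : Function.Periodic K 1 := hper
  set M := sSup (Set.range fun t => |K t|) with hMdef
  have hM : ∀ t, |K t| ≤ M := csb_absK hK hper
  haveI : IsFiniteMeasure (volume.restrict (Set.Icc (0:ℝ) 1)) := by
    constructor; rw [Measure.restrict_apply_univ]; simp
  have hmono : volume.restrict (Set.Ioc (0:ℝ) 1) ≤ volume.restrict (Set.Icc (0:ℝ) 1) :=
    Measure.restrict_mono Set.Ioc_subset_Icc_self le_rfl
  have hgi : Integrable g (volume.restrict (Set.Ioc (0:ℝ) 1)) :=
    (hg2.integrable one_le_two).mono_measure hmono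
  set G := fun u => ∫ y in Set.Ioc (0:ℝ) 1, K (u - y) * g y with hGdef
  have hGc : Continuous G := Kop_cont hK hM hg hgi
  simp_rw [intervalIntegral.integral_of_le zero_le_one]
  set Bgg := ∫ x in Set.Ioc (0:ℝ) 1, g x * G x with hBggdef
  have hBgg0 : 0 ≤ Bgg := by
    have h0 := hpsd g hg hg2
    simp_rw [intervalIntegral.integral_of_le zero_le_one] at h0
    exact h0
  set x₀ := Int.fract x with hx₀def
  have hx₀0 : 0 ≤ x₀ := Int.fract_nonneg x
  have hx₀1 : x₀ < 1 := Int.fract_lt_one x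
  have hGx : (∫ y in Set.Ioc (0:ℝ) 1, K (x - y) * g y) = G x₀ := by
    refine integral_congr_ae (Filter.Eventually.of_forall fun y => ?_)
    have h1 := hP.sub_int_mul_eq (x := x - y) ⌊x⌋
    rw [mul_one] at h1
    have h2 : x - y - ⌊x⌋ = x₀ - y := by
      rw [hx₀def, ← Int.self_sub_floor]; ring
    rw [h2] at h1
    show K (x - y) * g y = K (x₀ - y) * g y
    rw [h1]
  rw [hGx]
  -- FTC at x₀
  set H := fun u => ∫ t in x₀..u, G t with hHdef
  have hHd : HasDerivAt H (G x₀) x₀ :=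
    intervalIntegral.integral_hasDerivAt_right (hGc.intervalIntegrable _ _)
      (hGc.stronglyMeasurableAtFilter _ _) hGc.continuousAt
  have hslope : Filter.Tendsto (slope H x₀) (nhdsWithin x₀ (Set.Ioi x₀)) (nhds (G x₀)) :=
    (hasDerivAt_iff_tendsto_slope.1 hHd).mono_left
      (nhdsWithin_mono _ (fun u hu => Set.mem_compl_singleton_iff.2 (ne_of_gt (Set.mem_Ioi.1 hu))))
  have htend : Filter.Tendsto (fun u => (slope H x₀ u) ^ 2)
      (nhdsWithin x₀ (Set.Ioi x₀)) (nhds ((G x₀) ^ 2)) := hslope.pow 2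
  refine le_of_tendsto htend ?_
  filter_upwards [Ioc_mem_nhdsGT_of_mem (Set.mem_Ico.2 ⟨le_refl x₀, hx₀1⟩)] with u hu
  -- u ∈ Ioc x₀ 1
  have hε : 0 < u - x₀ := sub_pos.2 hu.1
  have hsub : Set.Ioc x₀ u ⊆ Set.Ioc (0:ℝ) 1 := Set.Ioc_subset_Ioc hx₀0 hu.2
  set f := Set.indicator (Set.Ioc x₀ u) (fun _ => (u - x₀)⁻¹) with hfdef
  have hfm : Measurable f := measurable_const.indicator measurableSet_Ioc
  have hf2 : MemLp f 2 (volume.restrict (Set.Icc (0:ℝ) 1)) := by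
    refine memLp_indicator_const 2 measurableSet_Ioc _ (Or.inr ?_)
    rw [Measure.restrict_apply measurableSet_Ioc]
    exact ((measure_mono Set.inter_subset_left).trans_lt measure_Ioc_lt_top).ne
  have hfi : Integrable f (volume.restrict (Set.Ioc (0:ℝ) 1)) :=
    (hf2.integrable one_le_two).mono_measure hmono
  have hf_nonneg : ∀ v, 0 ≤ f v := fun v =>
    Set.indicator_nonneg (fun _ _ => inv_nonneg.2 hε.le) v
  -- ∫ f = 1
  have hintf : (∫ v in Set.Ioc (0:ℝ) 1, f v) = 1 := by
    rw [hfdef, integral_indicator measurableSet_Ioc, Measure.restrict_restrict measurableSet_Ioc,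
      Set.inter_eq_self_of_subset_left hsub, setIntegral_const, Real.volume_real_Ioc_of_le hu.1.le,
      smul_eq_mul, mul_inv_cancel₀ hε.ne']
  -- Bff ≤ M
  have hKopf_le : ∀ x', (∫ y in Set.Ioc (0:ℝ) 1, K (x' - y) * f y) ≤ M := by
    intro x'
    refine le_trans (le_abs_self _) ((Kop_bound hK hM hfm hfi x').trans ?_)
    have habs : (∫ y in Set.Ioc (0:ℝ) 1, |f y|) = ∫ y in Set.Ioc (0:ℝ) 1, f y :=
      integral_congr_ae (Filter.Eventually.of_forall fun v => abs_of_nonneg (hf_nonneg v))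
    rw [habs, hintf, mul_one]
  have hBff_le : (∫ v in Set.Ioc (0:ℝ) 1, f v * ∫ y in Set.Ioc (0:ℝ) 1, K (v - y) * f y) ≤ M := by
    have h1 : (∫ v in Set.Ioc (0:ℝ) 1, f v * ∫ y in Set.Ioc (0:ℝ) 1, K (v - y) * f y)
        ≤ ∫ v in Set.Ioc (0:ℝ) 1, f v * M := by
      refine integral_mono (prod_int hK hM hfm hfi hfm hfi) (hfi.mul_const M) fun v => ?_
      exact mul_le_mul_of_nonneg_left (hKopf_le v) (hf_nonneg v)
    have h2 : (∫ v in Set.Ioc (0:ℝ) 1, f v * M) = M := by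
      rw [integral_mul_const, hintf, one_mul]
    linarith
  -- B f g = slope H x₀ u
  have hBfg : (∫ v in Set.Ioc (0:ℝ) 1, f v * G v) = slope H x₀ u := by
    have e1 : (fun v => f v * G v)
        = Set.indicator (Set.Ioc x₀ u) (fun v => (u - x₀)⁻¹ * G v) := by
      funext v
      rw [hfdef, ← Set.indicator_mul_left]
    rw [e1, integral_indicator measurableSet_Ioc, Measure.restrict_restrict measurableSet_Ioc,
      Set.inter_eq_self_of_subset_left hsub, integral_const_mul]
    rw [slope_def_field, hHdef]
    simp only [intervalIntegral.integral_same, sub_zero]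
    rw [intervalIntegral.integral_of_le hu.1.le, div_eq_inv_mul]
  have hcs := B_cs hK hsymm hM hpsd hfm hg hf2 hg2
  rw [hBfg] at hcs
  calc (slope H x₀ u) ^ 2 ≤
      (∫ v in Set.Ioc (0:ℝ) 1, f v * ∫ y in Set.Ioc (0:ℝ) 1, K (v - y) * f y) * Bgg := hcs
    _ ≤ M * Bgg := mul_le_mul_of_nonneg_right hBff_le hBgg0
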